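/- Let a, b, d ∈ ℝ satisfy (d − a)(d − b) > 0 (i.e., either both a < d and b < d, or both a > d and b > d). Then for every m ∈ (0, 1/2) there exists p ∈ (0, 1 − 2m) such that a·p/(p + m) + d·m/(p + m) = b·(1 − p − 2m)/(1 − p − m) + d·m/(1 − p − m). -/

import Mathlib

/-- existence of the prior weight `p` equalizing both traders'
conditional expectations, for every `m ∈ (0, 1/2)`. -/
theorem exists_p_equalizing (a b d : ℝ) (h : (d - a) * (d - b) > 0) :
    ∀ m : ℝ, 0 < m → m < 1 / 2 →
      ∃ p : ℝ, 0 < p ∧ p < 1 - 2 * m ∧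
        a * p / (p + m) + d * m / (p + m)
          = b * (1 - p - 2 * m) / (1 - p - m) + d * m / (1 - p - m) := by
  intro m hm hm2
  have hL0 : (0:ℝ) < 1 - 2 * m := by linarith
  set g : ℝ → ℝ := fun p =>
    a * p / (p + m) + d * m / (p + m)
      - (b * (1 - p - 2 * m) / (1 - p - m) + d * m / (1 - p - m)) with hg
  have hd1 : ∀ p ∈ Set.Icc (0:ℝ) (1 - 2 * m), p + m ≠ 0 := by
    intro p hp; have := hp.1; positivity
  have hd2 : ∀ p ∈ Set.Icc (0:ℝ) (1 - 2 * m), 1 - p - m ≠ 0 := by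
    intro p hp; have := hp.2; have : 1 - p - m ≥ m := by linarith
    linarith
  have hcont : ContinuousOn g (Set.Icc 0 (1 - 2 * m)) := by
    apply ContinuousOn.sub
    · exact ((continuous_const.mul continuous_id).continuousOn.div
        (continuous_id.add continuous_const).continuousOn hd1).add
        (continuousOn_const.div (continuous_id.add continuous_const).continuousOn hd1)
    · have hc : Continuous fun p : ℝ => 1 - p - m :=
        (continuous_const.sub continuous_id).sub continuous_const
      have hc2 : Continuous fun p : ℝ => 1 - p - 2 * m :=
        (continuous_const.sub continuous_id).sub continuous_const
      exact ((continuous_const.mul hc2).continuousOn.div hc.continuousOn hd2).add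
        (continuousOn_const.div hc.continuousOn hd2)
  have h1m : (0:ℝ) < 1 - m := by linarith
  have hg0 : g 0 = (1 - 2 * m) * (d - b) / (1 - m) := by
    simp only [hg]
    have h1m' : (1:ℝ) - m ≠ 0 := h1m.ne'
    have hm' : m ≠ 0 := hm.ne'
    simp only [sub_zero, zero_add, mul_zero, zero_div, add_zero]
    field_simp
    ring
  have hgL : g (1 - 2 * m) = (1 - 2 * m) * (a - d) / (1 - m) := by
    simp only [hg]
    rw [show 1 - (1 - 2 * m) - m = m by ring, show 1 - 2*m + m = 1 - m by ring,
      show 1 - (1 - 2*m) - 2*m = 0 by ring]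
    field_simp
    ring
  have key : ∃ p ∈ Set.Ioo (0:ℝ) (1 - 2 * m), g p = 0 := by
    rcases mul_pos_iff.mp h with ⟨ha, hb⟩ | ⟨ha, hb⟩
    · -- d > a and d > b : g 0 > 0 > g L
      have h0 : 0 < g 0 := by rw [hg0]; positivity
      have hLneg : g (1 - 2 * m) < 0 := by
        rw [hgL]; apply div_neg_of_neg_of_pos _ h1m
        exact mul_neg_of_pos_of_neg hL0 (by linarith)
      have := intermediate_value_Ioo' hL0.le hcont (Set.mem_Ioo.mpr ⟨hLneg, h0⟩)
      obtain ⟨p, hp, hgp⟩ := this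
      exact ⟨p, hp, hgp⟩
    · have h0 : g 0 < 0 := by
        rw [hg0]; apply div_neg_of_neg_of_pos _ h1m
        exact mul_neg_of_pos_of_neg hL0 (by linarith)
      have hLpos : 0 < g (1 - 2 * m) := by
        rw [hgL]; apply div_pos _ h1m
        exact mul_pos hL0 (by linarith)
      have := intermediate_value_Ioo hL0.le hcont (Set.mem_Ioo.mpr ⟨h0, hLpos⟩)
      obtain ⟨p, hp, hgp⟩ := this
      exact ⟨p, hp, hgp⟩
  obtain ⟨p, hp, hgp⟩ := key
  refine ⟨p, hp.1, hp.2, ?_⟩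
  have := sub_eq_zero.mp hgp
  linarith [this]
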